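/- The function R(s,t) = min{s,t} - st - 3(s-s²)(t-t²) on [0,1]² is positive semidefinite, i.e., for all n, all points s_1,…,s_n ∈ [0,1] and reals c_1,…,c_n, we have Σ_{i,j} c_i c_j R(s_i,s_j) ≥ 0. -/
import Mathlib

open Set MeasureTheory
set_option maxHeartbeats 1000000

noncomputable def bbf (a u : ℝ) : ℝ :=
  Set.indicator {x | x ≤ a} (fun _ => (1:ℝ)) u + (-a - 3*(a-a^2) + 6*(a-a^2)*u)

lemma ind_ii (a : ℝ) (g : ℝ → ℝ) (hg : Continuous g) :
    IntervalIntegrable (Set.indicator {x | x ≤ a} g) volume 0 1 :=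
  ⟨(hg.intervalIntegrable 0 1).1.indicator measurableSet_Iic,
   (hg.intervalIntegrable 0 1).2.indicator measurableSet_Iic⟩

lemma bbf_mul_eq (a b : ℝ) : (fun u => bbf a u * bbf b u) = fun u =>
    Set.indicator {x | x ≤ min a b} (fun _ => (1:ℝ)) u
    + Set.indicator {x | x ≤ a} (fun u => -b - 3*(b-b^2) + 6*(b-b^2)*u) u
    + Set.indicator {x | x ≤ b} (fun u => -a - 3*(a-a^2) + 6*(a-a^2)*u) u
    + (-a - 3*(a-a^2) + 6*(a-a^2)*u)*(-b - 3*(b-b^2) + 6*(b-b^2)*u) := by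
  funext u
  rcases le_total a b with h | h
  · simp only [min_eq_left h, bbf, Set.indicator, mem_setOf_eq]
    split_ifs <;> first | ring1 | (exfalso; linarith)
  · simp only [min_eq_right h, bbf, Set.indicator, mem_setOf_eq]
    split_ifs <;> first | ring1 | (exfalso; linarith)

attribute [irreducible] bbf

lemma bbf_mul_ii (a b : ℝ) :
    IntervalIntegrable (fun u => bbf a u * bbf b u) volume 0 1 := by
  rw [bbf_mul_eq]
  exact (((ind_ii _ _ continuous_const).add (ind_ii _ _ (by continuity))).add
    (ind_ii _ _ (by continuity))).add (Continuous.intervalIntegrable (by continuity) 0 1)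

lemma lin_int (p q m : ℝ) : ∫ u in (0:ℝ)..m, (p + q*u) = p*m + q*m^2/2 := by
  rw [intervalIntegral.integral_add (Continuous.intervalIntegrable (by continuity) _ _) (Continuous.intervalIntegrable (by continuity) _ _),
    intervalIntegral.integral_const, intervalIntegral.integral_const_mul, integral_id]
  simp; ring

lemma quad_int (p q p' q' : ℝ) :
    ∫ u in (0:ℝ)..1, (p + q*u)*(p' + q'*u) = p*p' + (p*q'+p'*q)/2 + q*q'/3 := by
  have h : (fun u => (p+q*u)*(p'+q'*u)) = fun u => (p*p' + (p*q'+p'*q)*u) + (q*q')*u^2 := by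
    funext u; ring
  rw [h, intervalIntegral.integral_add (Continuous.intervalIntegrable (by continuity) _ _) (Continuous.intervalIntegrable (by continuity) _ _), lin_int,
    intervalIntegral.integral_const_mul, integral_pow]
  norm_num; ring

lemma bbf_key {a b : ℝ} (ha : a ∈ Icc (0:ℝ) 1) (hb : b ∈ Icc (0:ℝ) 1) :
    ∫ u in (0:ℝ)..1, bbf a u * bbf b u
      = min a b - a*b - 3*(a-a^2)*(b-b^2) := by
  have hm : min a b ∈ Icc (0:ℝ) 1 := ⟨le_min ha.1 hb.1, min_le_of_left_le ha.2⟩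
  rw [bbf_mul_eq,
    intervalIntegral.integral_add (((ind_ii _ _ continuous_const).add
      (ind_ii _ _ (by continuity))).add (ind_ii _ _ (by continuity)))
        (Continuous.intervalIntegrable (by continuity) 0 1),
    intervalIntegral.integral_add ((ind_ii _ _ continuous_const).add
      (ind_ii _ _ (by continuity))) (ind_ii _ _ (by continuity)),
    intervalIntegral.integral_add (ind_ii _ _ continuous_const) (ind_ii _ _ (by continuity)),
    intervalIntegral.integral_indicator hm, intervalIntegral.integral_indicator ha,
    intervalIntegral.integral_indicator hb,
    lin_int, lin_int, quad_int, intervalIntegral.integral_const]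
  rcases le_total a b with h | h
  · rw [min_eq_left h]; simp; ring
  · rw [min_eq_right h]; simp; ring

lemma L1 {a b : ℝ} (ha : a ∈ Icc (0:ℝ) 1) (hb : b ∈ Icc (0:ℝ) 1) (ca cb : ℝ) :
    ca * cb * (min a b - a*b - 3*(a-a^2)*(b-b^2))
    = ∫ u in (0:ℝ)..1, (ca * bbf a u) * (cb * bbf b u) := by
  rw [← bbf_key ha hb, ← intervalIntegral.integral_const_mul]
  apply intervalIntegral.integral_congr
  intro u _
  ring

lemma L2 (a b ca cb : ℝ) :
    IntervalIntegrable (fun u => (ca * bbf a u) * (cb * bbf b u)) volume 0 1 := by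
  have heq : (fun u => (ca * bbf a u) * (cb * bbf b u))
      = fun u => (ca * cb) * (bbf a u * bbf b u) := by funext u; ring
  rw [heq]
  exact (bbf_mul_ii a b).const_mul _

/-- The covariance function `R(s,t) = min{s,t} - s t - 3 (s - s²)(t - t²)` of the
zero area Brownian bridge is positive semidefinite on `[0,1]²`. -/
theorem zero_area_brownian_bridge_cov_posSemidef
    (n : ℕ) (s : Fin n → ℝ) (hs : ∀ i, s i ∈ Icc (0:ℝ) 1) (c : Fin n → ℝ) :
    0 ≤ ∑ i, ∑ j, c i * c j *
      (min (s i) (s j) - s i * s j - 3*(s i - (s i)^2)*(s j - (s j)^2)) := by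
  have step1 : ∀ i : Fin n, ∑ j, c i * c j *
      (min (s i) (s j) - s i * s j - 3*(s i - (s i)^2)*(s j - (s j)^2))
      = ∫ u in (0:ℝ)..1, ∑ j, (c i * bbf (s i) u) * (c j * bbf (s j) u) := by
    intro i
    rw [intervalIntegral.integral_finset_sum (fun j _ => L2 (s i) (s j) (c i) (c j))]
    exact Finset.sum_congr rfl fun j _ => L1 (hs i) (hs j) (c i) (c j)
  have step2 : ∑ i, ∑ j, c i * c j *
      (min (s i) (s j) - s i * s j - 3*(s i - (s i)^2)*(s j - (s j)^2))
      = ∫ u in (0:ℝ)..1, (∑ i, c i * bbf (s i) u)^2 := by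
    have hInt : ∀ i : Fin n, IntervalIntegrable
        (fun u => ∑ j, (c i * bbf (s i) u) * (c j * bbf (s j) u)) volume 0 1 := by
      intro i
      rw [← Finset.sum_fn]
      exact IntervalIntegrable.sum _ fun j _ => L2 (s i) (s j) (c i) (c j)
    have swap : ∫ u in (0:ℝ)..1, ∑ i, ∑ j, (c i * bbf (s i) u) * (c j * bbf (s j) u)
        = ∑ i, ∫ u in (0:ℝ)..1, ∑ j, (c i * bbf (s i) u) * (c j * bbf (s j) u) :=
      intervalIntegral.integral_finset_sum (fun i _ => hInt i)
    rw [Finset.sum_congr rfl fun i _ => step1 i, ← swap]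
    apply intervalIntegral.integral_congr
    intro u _
    simp only [sq, Finset.sum_mul_sum]
  rw [step2]
  apply intervalIntegral.integral_nonneg (by norm_num)
  intro u _
  positivity
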